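/- Let p and q be distinct primes and H a finite group. If the subgroup λ_q(λ_p(H)) is trivial, where λ_r(G) = [G,G]·G^r, then H is isomorphic to a semidirect product (Z/qZ)^n ⋊ (Z/pZ)^m for some n, m and some action of (Z/pZ)^m on (Z/qZ)^n. -/

import Mathlib

/-- `lam r G = [G,G] G^r`, the subgroup generated by commutators and `r`-th powers. -/
def lam (r : ℕ) (G : Type*) [Group G] : Subgroup G :=
  commutator G ⊔ Subgroup.closure {x : G | ∃ g : G, x = g ^ r}

open Subgroup SemidirectProduct
open scoped commutatorElement

theorem vecIso (q : ℕ) [Fact q.Prime] (V : Type*) [AddCommGroup V] [Module (ZMod q) V]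
    [Finite V] : ∃ n, Nonempty (V ≃+ (Fin n → ZMod q)) :=
  ⟨_, ⟨(Module.finBasis (ZMod q) V).equivFun.toAddEquiv⟩⟩

theorem elemAb (q : ℕ) (hq : q.Prime) (A : Type*) [CommGroup A] [Finite A]
    (hA : ∀ a : A, a ^ q = 1) :
    ∃ n, Nonempty (A ≃* Multiplicative (Fin n → ZMod q)) := by
  haveI : Fact q.Prime := ⟨hq⟩
  haveI : NeZero q := ⟨hq.pos.ne'⟩
  letI : Module (ZMod q) (Additive A) := AddCommGroup.zmodModule (by
    intro x
    show (Additive.toMul x) ^ q = 1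
    exact hA _)
  obtain ⟨n, ⟨e⟩⟩ := vecIso q (Additive A)
  exact ⟨n, ⟨AddEquiv.toMultiplicativeRight e⟩⟩

theorem sdCongr {N K N' K' : Type*} [Group N] [Group K] [Group N'] [Group K']
    (e1 : N ≃* N') (e2 : K ≃* K') (φ : K →* MulAut N) :
    ∃ φ' : K' →* MulAut N', Nonempty ((N ⋊[φ] K) ≃* (N' ⋊[φ'] K')) := by
  refine ⟨(MulAut.congr e1).toMonoidHom.comp (φ.comp e2.symm.toMonoidHom), ⟨?_⟩⟩
  refine MulEquiv.mk' ⟨fun x => ⟨e1 x.1, e2 x.2⟩, fun x => ⟨e1.symm x.1, e2.symm x.2⟩,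
    fun x => by ext <;> simp, fun x => by ext <;> simp⟩ ?_
  intro x y
  ext <;> simp only [Equiv.coe_fn_mk]
  · erw [SemidirectProduct.mul_left, SemidirectProduct.mul_left]; simp
  · erw [SemidirectProduct.mul_right, SemidirectProduct.mul_right]; simp

/-- If `p ≠ q` are primes and `H` is a finite group with `λ_q(λ_p(H))` trivial, then
`H` is isomorphic to `(ℤ/qℤ)^n ⋊ (ℤ/pℤ)^m` for some `n, m` and some action. -/
theorem stmt_5 (p q : ℕ) (hp : p.Prime) (hq : q.Prime) (hpq : p ≠ q)
    (H : Type*) [Group H] [Finite H]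
    (h : lam q ↥(lam p H) = ⊥) :
    ∃ (n m : ℕ)
      (ρ : Multiplicative (Fin m → ZMod p) →* MulAut (Multiplicative (Fin n → ZMod q))),
      Nonempty (H ≃* (Multiplicative (Fin n → ZMod q)) ⋊[ρ] Multiplicative (Fin m → ZMod p)) := by
  haveI : Fact p.Prime := ⟨hp⟩
  haveI : Fact q.Prime := ⟨hq⟩
  set N := lam p H with hNdef
  -- commutators lie in N, powers lie in N
  have hcomm_le : commutator H ≤ N := le_sup_left
  have hpow_mem : ∀ g : H, g ^ p ∈ N :=
    fun g => Subgroup.mem_sup_right (Subgroup.subset_closure ⟨g, rfl⟩)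
  -- N is normal
  haveI hNnormal : N.Normal := by
    constructor
    intro n hn g
    have key : g * n * g⁻¹ = ⁅g, n⁆ * n := by group
    rw [key]
    exact N.mul_mem (hcomm_le (Subgroup.commutator_mem_commutator (mem_top g) (mem_top n)))
      hn
  -- the quotient is elementary abelian p
  letI : CommGroup (H ⧸ N) := by
    refine { (inferInstance : Group (H ⧸ N)) with mul_comm := ?_ }
    intro a b
    induction a using QuotientGroup.induction_on with | H a =>
    induction b using QuotientGroup.induction_on with | H b =>
    rw [← QuotientGroup.mk_mul, ← QuotientGroup.mk_mul]
    apply (QuotientGroup.eq (s := N)).mpr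
    have key : (a * b)⁻¹ * (b * a) = ⁅b⁻¹, a⁻¹⁆ := by group
    rw [key]
    exact hcomm_le (Subgroup.commutator_mem_commutator (mem_top _) (mem_top _))
  have hQpow : ∀ x : H ⧸ N, x ^ p = 1 := by
    intro x
    induction x using QuotientGroup.induction_on with | H a =>
    rw [← QuotientGroup.mk_pow]
    exact (QuotientGroup.eq_one_iff _).mpr (hpow_mem a)
  -- N is elementary abelian q
  have hNcomm : ∀ a b : ↥N, ⁅a, b⁆ = 1 := by
    intro a b
    have : ⁅a, b⁆ ∈ lam q ↥N :=
      Subgroup.mem_sup_left (Subgroup.commutator_mem_commutator (mem_top a) (mem_top b))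
    rw [h] at this
    exact (Subgroup.mem_bot).mp this
  have hNpow : ∀ a : ↥N, a ^ q = 1 := by
    intro a
    have : a ^ q ∈ lam q ↥N := Subgroup.mem_sup_right (Subgroup.subset_closure ⟨a, rfl⟩)
    rw [h] at this
    exact (Subgroup.mem_bot).mp this
  letI : CommGroup ↥N :=
    { (inferInstance : Group ↥N) with
      mul_comm := fun a b => commutatorElement_eq_one_iff_mul_comm.mp (hNcomm a b) }
  -- Schur-Zassenhaus
  have hNq : IsPGroup q ↥N := fun g => ⟨1, by rw [pow_one]; exact hNpow g⟩
  have hQp : IsPGroup p (H ⧸ N) := fun g => ⟨1, by rw [pow_one]; exact hQpow g⟩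
  obtain ⟨a, ha⟩ := hNq.exists_card_eq
  obtain ⟨b, hb⟩ := hQp.exists_card_eq
  have hcop : Nat.Coprime (Nat.card ↥N) N.index := by
    rw [Subgroup.index_eq_card, ha, hb]
    exact Nat.Coprime.pow _ _ ((Nat.coprime_primes hq hp).mpr (Ne.symm hpq))
  obtain ⟨K, hK⟩ := Subgroup.exists_right_complement'_of_coprime hcop
  -- H ≃* N ⋊ K
  let φ : ↥K →* MulAut ↥N := MulAut.conjNormal.comp K.subtype
  have hcond : ∀ k : ↥K, N.subtype.comp ((φ k).toMonoidHom)
      = (MulAut.conj (K.subtype k)).toMonoidHom.comp N.subtype := by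
    intro k
    ext n
    simp [φ, MulAut.conjNormal_apply]
  let f : (↥N ⋊[φ] ↥K) →* H := lift N.subtype K.subtype hcond
  have hf : ∀ x : ↥N ⋊[φ] ↥K, f x = (x.left : H) * (x.right : H) := fun x => rfl
  have finj : Function.Injective f := by
    rw [injective_iff_map_eq_one]
    intro x hx
    rw [hf] at hx
    have hmem : (x.left : H) ∈ N ⊓ K := by
      constructor
      · exact x.left.2
      · have : (x.left : H) = (x.right : H)⁻¹ := by
          rw [eq_inv_iff_mul_eq_one]; exact hx
        rw [this]
        exact K.inv_mem x.right.2
    rw [disjoint_iff.mp hK.disjoint, Subgroup.mem_bot] at hmem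
    have hr : (x.right : H) = 1 := by
      have := hx
      rw [hmem, one_mul] at this
      exact this
    ext
    · exact hmem
    · exact hr
  have fsurj : Function.Surjective f := by
    intro g
    obtain ⟨⟨n, k⟩, hnk⟩ := (hK.existsUnique g).exists
    exact ⟨⟨n, k⟩, hnk⟩
  let E : (↥N ⋊[φ] ↥K) ≃* H := MulEquiv.ofBijective f ⟨finj, fsurj⟩
  -- K ≃* H ⧸ N
  let g2 : ↥K →* H ⧸ N := (QuotientGroup.mk' N).comp K.subtype
  have g2inj : Function.Injective g2 := by
    rw [injective_iff_map_eq_one]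
    intro k hk
    have hkN : (k : H) ∈ N := (QuotientGroup.eq_one_iff _).mp hk
    have hmem : (k : H) ∈ N ⊓ K := ⟨hkN, k.2⟩
    rw [disjoint_iff.mp hK.disjoint, Subgroup.mem_bot] at hmem
    exact Subtype.ext hmem
  have g2surj : Function.Surjective g2 := by
    intro x
    induction x using QuotientGroup.induction_on with | H g =>
    obtain ⟨⟨n, k⟩, hnk⟩ := (hK.existsUnique g).exists
    refine ⟨k, ?_⟩
    show QuotientGroup.mk (k : H) = QuotientGroup.mk g
    apply (QuotientGroup.eq (s := N)).mpr
    rw [← hnk]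
    have key : (k : H)⁻¹ * ((n : H) * (k : H)) = (k : H)⁻¹ * (n : H) * (k : H) := by group
    rw [key]
    exact hNnormal.conj_mem' _ n.2 _
  let eK : ↥K ≃* H ⧸ N := MulEquiv.ofBijective g2 ⟨g2inj, g2surj⟩
  -- classify both pieces
  obtain ⟨n, ⟨e1⟩⟩ := elemAb q hq ↥N hNpow
  obtain ⟨m, ⟨eQ⟩⟩ := elemAb p hp (H ⧸ N) hQpow
  obtain ⟨ρ, ⟨E2⟩⟩ := sdCongr e1 (eK.trans eQ) φ
  exact ⟨n, m, ρ, ⟨E.symm.trans E2⟩⟩
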